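/- Let (Ω, μ) be a finite measure space, p > 1 a real number, C ≥ 0, (c_n) a sequence of measurable functions c_n : Ω → [0,∞), and (η_n) a sequence in (0,1] with η_n → 0, such that η_n·∫_Ω c_n^p dμ ≤ C for every n. Then η_n·∫_Ω c_n^{p−1/2} dμ → 0 as n → ∞. More precisely, η_n·∫_Ω c_n^{p−1/2} dμ ≤ C^{(2p−1)/(2p)}·η_n^{1/(2p)}·μ(Ω)^{1/(2p)}. -/

import Mathlib

open MeasureTheory Real Filter

/-- Interpolation: `∫ g^θ ≤ (∫ g)^θ * μ(univ)^(1-θ)` for `θ ∈ (0,1)`. -/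
lemma lintegral_rpow_le_aux {Ω : Type*} [MeasurableSpace Ω] (μ : Measure Ω)
    {g : Ω → ENNReal} (hg : AEMeasurable g μ) {θ : ℝ} (hθ0 : 0 < θ) (hθ1 : θ < 1) :
    ∫⁻ x, (g x) ^ θ ∂μ ≤ (∫⁻ x, g x ∂μ) ^ θ * (μ Set.univ) ^ (1 - θ) := by
  have hconj : (1/θ).HolderConjugate (1/(1-θ)) := by
    rw [Real.holderConjugate_iff]
    constructor
    · rw [lt_div_iff₀ hθ0]; linarith
    · rw [one_div, one_div, inv_inv, inv_inv]; ring
  have h := ENNReal.lintegral_mul_le_Lp_mul_Lq μ hconj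
    (f := fun x => (g x) ^ θ) (g := fun _ => 1)
    (hg.pow_const θ) aemeasurable_const
  simp only [Pi.mul_apply, mul_one, ENNReal.one_rpow, lintegral_one, lintegral_const,
    one_div, inv_inv] at h
  calc ∫⁻ x, (g x) ^ θ ∂μ
      ≤ (∫⁻ x, ((g x) ^ θ) ^ (θ⁻¹ : ℝ) ∂μ) ^ θ * (μ Set.univ) ^ (1 - θ) := h
    _ = (∫⁻ x, g x ∂μ) ^ θ * (μ Set.univ) ^ (1 - θ) := by
        congr 2
        refine lintegral_congr fun x => ?_
        rw [← ENNReal.rpow_mul, mul_inv_cancel₀ hθ0.ne', ENNReal.rpow_one]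

theorem vanishing_regularization {Ω : Type*} [MeasurableSpace Ω] (μ : Measure Ω)
    [IsFiniteMeasure μ] (p C : ℝ) (hp : 1 < p) (hC : 0 ≤ C)
    (c : ℕ → Ω → ℝ) (hmeas : ∀ n, Measurable (c n)) (hnonneg : ∀ n x, 0 ≤ c n x)
    (η : ℕ → ℝ) (hη : ∀ n, η n ∈ Set.Ioc (0 : ℝ) 1)
    (hη0 : Tendsto η atTop (nhds 0))
    (hbound : ∀ n, ENNReal.ofReal (η n) * ∫⁻ x, ENNReal.ofReal ((c n x) ^ p) ∂μ ≤
      ENNReal.ofReal C) :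
    Tendsto (fun n => ENNReal.ofReal (η n) *
        ∫⁻ x, ENNReal.ofReal ((c n x) ^ (p - 1/2)) ∂μ) atTop (nhds 0) ∧
    ∀ n, ENNReal.ofReal (η n) * ∫⁻ x, ENNReal.ofReal ((c n x) ^ (p - 1/2)) ∂μ ≤
      ENNReal.ofReal (C ^ ((2*p - 1)/(2*p)) * (η n) ^ (1/(2*p))) *
        (μ Set.univ) ^ ((1:ℝ)/(2*p)) := by
  set θ : ℝ := (2*p - 1)/(2*p) with hθdef
  have hp0 : (0:ℝ) < p := by linarith
  have hθ0 : 0 < θ := div_pos (by linarith) (by linarith)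
  have hθ1 : θ < 1 := by
    rw [hθdef, div_lt_one (by linarith)]; linarith
  have h1θ : 1 - θ = 1/(2*p) := by
    rw [hθdef]; field_simp; ring
  have hbd : ∀ n, ENNReal.ofReal (η n) * ∫⁻ x, ENNReal.ofReal ((c n x) ^ (p - 1/2)) ∂μ ≤
      ENNReal.ofReal (C ^ ((2*p - 1)/(2*p)) * (η n) ^ (1/(2*p))) *
        (μ Set.univ) ^ ((1:ℝ)/(2*p)) := by
    intro n
    have hηpos : 0 < η n := (hη n).1
    -- rewrite the integrand
    have heq : ∀ x, ENNReal.ofReal ((c n x) ^ (p - 1/2)) =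
        (ENNReal.ofReal ((c n x) ^ p)) ^ θ := by
      intro x
      rw [ENNReal.ofReal_rpow_of_nonneg (Real.rpow_nonneg (hnonneg n x) p) hθ0.le,
        ← Real.rpow_mul (hnonneg n x)]
      have hpθ : p * θ = p - 1/2 := by
        rw [hθdef]; field_simp
      rw [hpθ]
    have hint : (∫⁻ x, ENNReal.ofReal ((c n x) ^ (p - 1/2)) ∂μ) ≤
        (∫⁻ x, ENNReal.ofReal ((c n x) ^ p) ∂μ) ^ θ * (μ Set.univ) ^ (1 - θ) := by
      simp_rw [heq]
      exact lintegral_rpow_le_aux μ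
        ((ENNReal.measurable_ofReal.comp
          ((Real.continuous_rpow_const hp0.le).measurable.comp (hmeas n))).aemeasurable) hθ0 hθ1
    set I := ∫⁻ x, ENNReal.ofReal ((c n x) ^ p) ∂μ with hIdef
    have hηne : ENNReal.ofReal (η n) ≠ 0 := by
      simp [ENNReal.ofReal_eq_zero, not_le, hηpos]
    have hIne : I ≠ ⊤ := by
      intro hI
      have hb := hbound n
      rw [← hIdef, hI, ENNReal.mul_top hηne] at hb
      exact ENNReal.ofReal_ne_top (top_le_iff.mp hb)
    have hsplit : ENNReal.ofReal (η n) =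
        ENNReal.ofReal (η n) ^ θ * ENNReal.ofReal (η n) ^ (1 - θ) := by
      rw [← ENNReal.rpow_add _ _ hηne ENNReal.ofReal_ne_top]
      simp
    calc ENNReal.ofReal (η n) * ∫⁻ x, ENNReal.ofReal ((c n x) ^ (p - 1/2)) ∂μ
        ≤ ENNReal.ofReal (η n) * (I ^ θ * (μ Set.univ) ^ (1 - θ)) :=
          mul_le_mul_right hint _
      _ = (ENNReal.ofReal (η n) * I) ^ θ *
            (ENNReal.ofReal (η n) ^ (1 - θ) * (μ Set.univ) ^ (1 - θ)) := by
          rw [ENNReal.mul_rpow_of_ne_top ENNReal.ofReal_ne_top hIne]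
          conv_lhs => rw [hsplit]
          ring
      _ ≤ (ENNReal.ofReal C) ^ θ *
            (ENNReal.ofReal (η n) ^ (1 - θ) * (μ Set.univ) ^ (1 - θ)) := by
          gcongr
          exact hbound n
      _ = ENNReal.ofReal (C ^ ((2*p - 1)/(2*p)) * (η n) ^ (1/(2*p))) *
            (μ Set.univ) ^ ((1:ℝ)/(2*p)) := by
          rw [ENNReal.ofReal_mul (Real.rpow_nonneg hC _),
            ENNReal.ofReal_rpow_of_nonneg hC hθ0.le, h1θ,
            ENNReal.ofReal_rpow_of_nonneg hηpos.le
              (le_of_lt (div_pos one_pos (by linarith))), ← hθdef]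
          ring
  refine ⟨?_, hbd⟩
  -- squeeze
  have hlim : Tendsto (fun n => ENNReal.ofReal (C ^ ((2*p - 1)/(2*p)) * (η n) ^ (1/(2*p))) *
      (μ Set.univ) ^ ((1:ℝ)/(2*p))) atTop (nhds 0) := by
    have hepos : (0:ℝ) < 1/(2*p) := div_pos one_pos (by linarith)
    have h1 : Tendsto (fun n => (η n) ^ (1/(2*p))) atTop (nhds 0) := by
      have h := hη0.rpow_const (p := 1/(2*p)) (Or.inr hepos.le)
      rwa [Real.zero_rpow hepos.ne'] at h
    have h2 : Tendsto (fun n => C ^ ((2*p - 1)/(2*p)) * (η n) ^ (1/(2*p))) atTop (nhds 0) := by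
      simpa using h1.const_mul (C ^ ((2*p - 1)/(2*p)))
    have h3 : Tendsto (fun n => ENNReal.ofReal (C ^ ((2*p - 1)/(2*p)) * (η n) ^ (1/(2*p))))
        atTop (nhds 0) := by
      simpa [Function.comp_def] using (ENNReal.continuous_ofReal.tendsto 0).comp h2
    have h4 := ENNReal.Tendsto.mul_const (b := μ Set.univ ^ ((1:ℝ)/(2*p))) h3
      (Or.inr (ENNReal.rpow_ne_top_of_nonneg hepos.le (measure_ne_top μ _)))
    simpa using h4
  exact tendsto_of_tendsto_of_tendsto_of_le_of_le tendsto_const_nhds hlim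
    (fun n => zero_le) hbd
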